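/- Let m ≥ 1 be an integer, let μ > -m/2 and η > -m/2 be real numbers, and let 0 ≤ γ < 1. Then ∫_{ℝᵐ} (zᵀz)^η · ₁F₁(-μ; m/2; -γ·zᵀz/2) · ψ_{0,I}(z) dz = 2^η · (Γ(η+m/2)/Γ(m/2)) · ₂F₁(η+m/2, -μ; m/2; -γ), where I is the m×m identity matrix. -/

import Mathlib

open Real MeasureTheory Set Filter

/-- Pochhammer symbol `(a)ₙ = ∏_{i=1}^n (a+i-1)`. -/
noncomputable def poch (a : ℝ) (n : ℕ) : ℝ := ∏ i ∈ Finset.range n, (a + i)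

/-- Confluent hypergeometric series `₁F₁(b;c;z) = ∑ (b)ₙ/(c)ₙ · zⁿ/n!`. -/
noncomputable def oneF1 (b c z : ℝ) : ℝ :=
  ∑' n : ℕ, poch b n / poch c n * z ^ n / (n.factorial : ℝ)

/-- Gauss hypergeometric series `₂F₁(a,b;c;z) = ∑ (a)ₙ(b)ₙ/(c)ₙ · zⁿ/n!`. -/
noncomputable def twoF1 (a b c z : ℝ) : ℝ :=
  ∑' n : ℕ, poch a n * poch b n / poch c n * z ^ n / (n.factorial : ℝ)

/-- Multivariate normal density `ψ_{κ,λI}` on `ℝᵐ`. -/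
noncomputable def gaussDensityIso (m : ℕ) (κ : Fin m → ℝ) (l : ℝ) (z : Fin m → ℝ) : ℝ :=
  (2 * π) ^ (-(m : ℝ) / 2) * (l ^ m) ^ (-(1 : ℝ) / 2) *
    Real.exp (-(∑ i, (z i - κ i) ^ 2) / (2 * l))


open Module in
lemma integrable_fun_norm_addHaar {E : Type*} [NormedAddCommGroup E] [NormedSpace ℝ E]
    [MeasurableSpace E] [BorelSpace E] [Nontrivial E] [FiniteDimensional ℝ E]
    (μ : Measure E) [μ.IsAddHaarMeasure] {f : ℝ → ℝ} (hfm : Measurable f)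
    (hf : IntegrableOn (fun y => y ^ (finrank ℝ E - 1) * f y) (Ioi (0:ℝ))) :
    Integrable (fun x => f ‖x‖) μ := by
  have hs : MeasurableSet ({(0:E)}ᶜ) := (measurableSet_singleton _).compl
  suffices h : Integrable (fun x : ({(0:E)}ᶜ : Set E) => f ‖(x : E)‖) (μ.comap Subtype.val) by
    have h2 : Integrable (fun x : E => f ‖x‖) (Measure.map Subtype.val (μ.comap Subtype.val)) :=
      ((MeasurableEmbedding.subtype_coe hs).integrable_map_iff).mpr h
    rwa [map_comap_subtype_coe hs, MeasureTheory.restrict_compl_singleton] at h2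
  have key := (μ.measurePreserving_homeomorphUnitSphereProd).integrable_comp_emb
    (Homeomorph.measurableEmbedding _) (g := f ∘ Subtype.val ∘ Prod.snd)
  rw [show ((f ∘ Subtype.val ∘ Prod.snd) ∘ (homeomorphUnitSphereProd E))
      = fun x : ({(0:E)}ᶜ : Set E) => f ‖(x : E)‖ from funext fun x => by simp] at key
  rw [key]
  -- reduce product measure to second factor
  set n := finrank ℝ E - 1 with hn
  have hIoi : Integrable (fun x : Ioi (0:ℝ) => (x:ℝ) ^ n * f x)
      ((volume : Measure ℝ).comap Subtype.val) := by
    have h1 : Integrable (fun y : ℝ => y ^ n * f y)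
        (Measure.map (Subtype.val : Ioi (0:ℝ) → ℝ) ((volume : Measure ℝ).comap Subtype.val)) := by
      rwa [map_comap_subtype_coe measurableSet_Ioi]
    exact ((MeasurableEmbedding.subtype_coe measurableSet_Ioi).integrable_map_iff).mp h1
  have hQ : Integrable (f ∘ Subtype.val) (Measure.volumeIoiPow n) := by
    rw [Measure.volumeIoiPow, integrable_withDensity_iff
      ((measurable_subtype_coe.pow_const n).ennreal_ofReal)
      (Eventually.of_forall fun x => ENNReal.ofReal_lt_top)]
    refine hIoi.congr (Eventually.of_forall fun x => ?_)
    simp only [Function.comp_apply]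
    rw [ENNReal.toReal_ofReal (pow_nonneg (le_of_lt x.2) n), mul_comm]
  -- product
  have hsm : AEStronglyMeasurable (f ∘ Subtype.val)
      (Measure.map Prod.snd (μ.toSphere.prod (Measure.volumeIoiPow n))) :=
    (hfm.comp measurable_subtype_coe).aestronglyMeasurable
  refine (integrable_map_measure hsm measurable_snd.aemeasurable).mp ?_
  rw [Measure.map_snd_prod]
  refine (integrable_smul_measure ?_ ?_).mpr hQ
  · rw [Measure.toSphere_apply_univ]
    refine (ENNReal.mul_pos ?_ ?_).ne'
    · exact_mod_cast Nat.cast_ne_zero.mpr finrank_pos.ne'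
    · exact (Metric.measure_ball_pos μ 0 one_pos).ne'
  · exact measure_ne_top _ _


lemma gaussDensityIso_eq (m : ℕ) (z : Fin m → ℝ) :
    gaussDensityIso m 0 1 z = (2 * π) ^ (-(m : ℝ) / 2) * Real.exp (-(∑ i, z i ^ 2) / 2) := by
  simp [gaussDensityIso]

lemma gauss_moment (m : ℕ) (hm : 1 ≤ m) (s : ℝ) (hs : -(m : ℝ) / 2 < s) :
    Integrable (fun z : Fin m → ℝ => (∑ i, z i ^ 2) ^ s * gaussDensityIso m 0 1 z) ∧
    ∫ z : Fin m → ℝ, (∑ i, z i ^ 2) ^ s * gaussDensityIso m 0 1 z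
      = 2 ^ s * (Real.Gamma (s + m / 2) / Real.Gamma (m / 2)) := by
  haveI : Nonempty (Fin m) := Fin.pos_iff_nonempty.mp hm
  have hm2 : (0 : ℝ) < m / 2 := by
    have : (0:ℝ) < m := by exact_mod_cast hm
    linarith
  have hsm : 0 < s + m / 2 := by linarith
  set f : ℝ → ℝ := fun y => (y ^ 2) ^ s * Real.exp (-(y ^ 2) / 2) with hf_def
  have hfm : Measurable f := by
    fun_prop
  -- 1D integrability and value
  have hcast : ((m - 1 : ℕ) : ℝ) = (m : ℝ) - 1 := by
    rw [Nat.cast_sub hm]; norm_num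
  have hcongr : ∀ y ∈ Ioi (0:ℝ), y ^ (m - 1) * f y
      = y ^ (2 * s + (m : ℝ) - 1) * Real.exp (-(1/2) * y ^ (2:ℕ)) := by
    intro y hy
    have hy0 : (0:ℝ) < y := hy
    have h1 : (y ^ 2 : ℝ) ^ s = y ^ (2 * s) := by
      rw [← Real.rpow_natCast y 2, ← Real.rpow_mul hy0.le]
      norm_num
    have h2 : (y : ℝ) ^ (m - 1) = y ^ ((m : ℝ) - 1) := by
      rw [← Real.rpow_natCast y (m - 1), hcast]
    rw [hf_def]
    simp only
    rw [h1, h2, ← mul_assoc, ← Real.rpow_add hy0]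
    ring_nf
  have h1d_int : IntegrableOn (fun y : ℝ => y ^ (m - 1) * f y) (Ioi (0:ℝ)) := by
    refine ((integrable_rpow_mul_exp_neg_mul_sq (by norm_num : (0:ℝ) < 1/2)
        (by push_cast; linarith : (-1:ℝ) < 2 * s + (m:ℝ) - 1)).integrableOn).congr_fun
      (fun y hy => (hcongr y hy).symm) measurableSet_Ioi
  have h1d_val : ∫ y in Ioi (0:ℝ), y ^ (m - 1) * f y
      = 2 ^ (s + (m:ℝ)/2 - 1) * Real.Gamma (s + (m:ℝ) / 2) := by
    rw [setIntegral_congr_fun measurableSet_Ioi hcongr]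
    have hstep : ∀ y ∈ Ioi (0:ℝ), y ^ (2*s + (m:ℝ) - 1) * Real.exp (-(1/2) * y ^ (2:ℕ))
        = y ^ (2*s + (m:ℝ) - 1) * Real.exp (-(1/2) * y ^ (2:ℝ)) := by
      intro y hy
      rw [Real.rpow_two]
    rw [setIntegral_congr_fun measurableSet_Ioi hstep,
      integral_rpow_mul_exp_neg_mul_rpow two_pos
        (by push_cast; linarith : (-1:ℝ) < 2 * s + (m:ℝ) - 1)
        (by norm_num : (0:ℝ) < 1/2)]
    rw [show (2*s + (m:ℝ) - 1 + 1)/2 = s + (m:ℝ)/2 by ring,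
      show -(2*s + (m:ℝ) - 1 + 1)/2 = -(s + (m:ℝ)/2) by ring]
    rw [one_div, Real.inv_rpow (by norm_num : (0:ℝ) ≤ 2), ← Real.rpow_neg (by norm_num : (0:ℝ) ≤ 2),
      neg_neg]
    have h2 : (2:ℝ) ^ (s + (m:ℝ)/2 - 1) = 2 ^ s * 2 ^ ((m:ℝ)/2) * 2⁻¹ := by
      rw [show s + (m:ℝ)/2 - 1 = s + ((m:ℝ)/2 + (-1)) by ring, Real.rpow_add two_pos,
        Real.rpow_add two_pos, Real.rpow_neg_one]
      ring
    rw [h2, Real.rpow_add two_pos]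
  -- Euclidean space transfer
  set c : ℝ := (2 * π) ^ (-(m : ℝ) / 2) with hc
  set F : (Fin m → ℝ) → ℝ := fun z => (∑ i, z i ^ 2) ^ s * Real.exp (-(∑ i, z i ^ 2) / 2) with hF
  have integrand_eq : (fun z : Fin m → ℝ => (∑ i, z i ^ 2) ^ s * gaussDensityIso m 0 1 z)
      = fun z => c * F z := by
    funext z
    rw [gaussDensityIso_eq, hF]
    ring
  haveI : Nontrivial (EuclideanSpace ℝ (Fin m)) := by
    refine ⟨0, EuclideanSpace.single ⟨0, hm⟩ 1, fun h => ?_⟩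
    have := congrArg (fun v : EuclideanSpace ℝ (Fin m) => v ⟨0, hm⟩) h.symm
    simp [EuclideanSpace.single_apply] at this
  have hdim : Module.finrank ℝ (EuclideanSpace ℝ (Fin m)) = m := by
    rw [finrank_euclideanSpace, Fintype.card_fin]
  have hnorm : ∀ x : EuclideanSpace ℝ (Fin m),
      f ‖x‖ = F (((MeasurableEquiv.toLp 2 (Fin m → ℝ)).symm) x) := by
    intro x
    have h0 : (0:ℝ) ≤ ∑ i, x i ^ 2 := Finset.sum_nonneg fun i _ => sq_nonneg _
    have hx : ‖x‖ ^ 2 = ∑ i, x i ^ 2 := by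
      rw [EuclideanSpace.norm_eq]
      simp only [Real.norm_eq_abs, sq_abs]
      exact Real.sq_sqrt h0
    show (‖x‖ ^ 2) ^ s * Real.exp (-(‖x‖ ^ 2) / 2) = _
    rw [hx]
    rfl
  have hMP := EuclideanSpace.volume_preserving_symm_measurableEquiv_toLp (Fin m)
  have hIntE : Integrable (fun x : EuclideanSpace ℝ (Fin m) => f ‖x‖) := by
    refine integrable_fun_norm_addHaar volume hfm ?_
    rw [hdim]
    exact h1d_int
  have hcomp : (F ∘ ((MeasurableEquiv.toLp 2 (Fin m → ℝ)).symm))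
      = fun x : EuclideanSpace ℝ (Fin m) => f ‖x‖ := funext fun x => (hnorm x).symm
  have hIntF : Integrable F := by
    rw [← hMP.integrable_comp_emb (MeasurableEquiv.measurableEmbedding _), hcomp]
    exact hIntE
  constructor
  · rw [integrand_eq]
    exact hIntF.const_mul c
  · rw [integrand_eq, integral_const_mul]
    have hIF : ∫ z : Fin m → ℝ, F z = ∫ x : EuclideanSpace ℝ (Fin m), f ‖x‖ := by
      rw [← hMP.integral_comp (MeasurableEquiv.measurableEmbedding _) F]
      exact integral_congr_ae (Eventually.of_forall fun x => (hnorm x).symm)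
    rw [hIF, integral_fun_norm_addHaar volume f, hdim]
    have hI1 : ∫ y in Ioi (0:ℝ), y ^ (m - 1) • f y = 2 ^ (s + (m:ℝ)/2 - 1) * Real.Gamma (s + (m:ℝ) / 2) := by
      rw [← h1d_val]
      simp [smul_eq_mul]
    rw [hI1]
    have hV : (volume (Metric.ball (0 : EuclideanSpace ℝ (Fin m)) 1)).toReal
        = π ^ ((m:ℝ)/2) / Real.Gamma ((m:ℝ)/2 + 1) := by
      rw [EuclideanSpace.volume_ball, Fintype.card_fin, ENNReal.ofReal_one, one_pow, one_mul,
        ENNReal.toReal_ofReal]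
      · congr 1
        rw [Real.sqrt_eq_rpow, ← Real.rpow_natCast (π ^ ((1:ℝ)/2)) m, ← Real.rpow_mul pi_pos.le]
        congr 1
        ring
      · have := Real.Gamma_pos_of_pos (by positivity : (0:ℝ) < (m:ℝ)/2 + 1)
        positivity
    rw [Measure.real, hV, nsmul_eq_mul, smul_eq_mul]
    have hΓm : Real.Gamma ((m:ℝ)/2 + 1) = ((m:ℝ)/2) * Real.Gamma ((m:ℝ)/2) :=
      Real.Gamma_add_one hm2.ne'
    have hc_split : c = 2 ^ (-(m:ℝ)/2) * π ^ (-(m:ℝ)/2) := by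
      rw [hc, Real.mul_rpow two_pos.le pi_pos.le]
    have r1 : π ^ (-(m:ℝ)/2) * π ^ ((m:ℝ)/2) = 1 := by
      rw [← Real.rpow_add pi_pos, show -(m:ℝ)/2 + (m:ℝ)/2 = 0 by ring, Real.rpow_zero]
    have r2 : (2:ℝ) ^ (-(m:ℝ)/2) * 2 ^ (s + (m:ℝ)/2 - 1) * 2 = 2 ^ s := by
      have : (2:ℝ) ^ (-(m:ℝ)/2) * 2 ^ (s + (m:ℝ)/2 - 1) * 2
          = 2 ^ ((-(m:ℝ)/2) + (s + (m:ℝ)/2 - 1)) * 2 ^ (1:ℝ) := by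
        rw [← Real.rpow_add two_pos, Real.rpow_one]
      rw [this, ← Real.rpow_add two_pos]
      congr 1
      ring
    rw [hΓm, hc_split]
    have hΓm0 : Real.Gamma ((m:ℝ)/2) ≠ 0 := (Real.Gamma_pos_of_pos hm2).ne'
    have hm0 : (m:ℝ) ≠ 0 := by positivity
    have key : ∀ (A B C D E2 Gs Gm M : ℝ), Gm ≠ 0 → M ≠ 0 → B * C = 1 → A * D * 2 = E2 →
        A * B * (M * (C / (M / 2 * Gm) * (D * Gs))) = E2 * (Gs / Gm) := by
      intro A B C D E2 Gs Gm M hGm hM h1 h2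
      rw [← h2]
      field_simp
      linear_combination (A * D * Gs) * h1
    exact key _ _ _ _ _ _ _ _ hΓm0 hm0 r1 r2


lemma poch_succ (a : ℝ) (n : ℕ) : poch a (n + 1) = poch a n * (a + n) :=
  Finset.prod_range_succ _ _

lemma poch_pos {a : ℝ} (ha : 0 < a) (n : ℕ) : 0 < poch a n :=
  Finset.prod_pos fun i _ => by positivity

lemma Gamma_add_nat {a : ℝ} (ha : 0 < a) (n : ℕ) :
    Real.Gamma (a + n) = Real.Gamma a * poch a n := by
  induction n with
  | zero => simp [poch]
  | succ n ih =>
    have h : a + ((n : ℝ) + 1) = (a + n) + 1 := by ring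
    push_cast
    rw [h, Real.Gamma_add_one (by positivity), ih, poch_succ]
    ring


/-- for `m ≥ 1`, real `μ, η > -m/2`, and `0 ≤ γ < 1`,
`∫_{ℝᵐ} (zᵀz)^η ₁F₁(-μ; m/2; -γ·zᵀz/2) ψ_{0,I}(z) dz
  = 2^η (Γ(η+m/2)/Γ(m/2)) ₂F₁(η+m/2, -μ; m/2; -γ)`. -/
theorem stmt4 (m : ℕ) (hm : 1 ≤ m) (μ η : ℝ)
    (hμ : -(m : ℝ) / 2 < μ) (hη : -(m : ℝ) / 2 < η)
    (γ : ℝ) (hγ0 : 0 ≤ γ) (hγ1 : γ < 1) :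
    ∫ z : Fin m → ℝ,
        (∑ i, z i ^ 2) ^ η * oneF1 (-μ) ((m : ℝ) / 2) (-(γ * ∑ i, z i ^ 2) / 2) *
          gaussDensityIso m 0 1 z =
      (2 : ℝ) ^ η * (Real.Gamma (η + (m : ℝ) / 2) / Real.Gamma ((m : ℝ) / 2)) *
        twoF1 (η + (m : ℝ) / 2) (-μ) ((m : ℝ) / 2) (-γ) := by
  haveI : Nonempty (Fin m) := Fin.pos_iff_nonempty.mp hm
  have hm2 : (0 : ℝ) < (m : ℝ) / 2 := by
    have : (0:ℝ) < m := by exact_mod_cast hm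
    linarith
  have hsm : 0 < η + (m : ℝ) / 2 := by linarith
  set c : ℕ → ℝ := fun n => poch (-μ) n / poch ((m:ℝ)/2) n * (-γ/2) ^ n / (n.factorial : ℝ)
    with hc
  set Fn : ℕ → (Fin m → ℝ) → ℝ :=
    fun n z => c n * ((∑ i, z i ^ 2) ^ (η + (n:ℝ)) * gaussDensityIso m 0 1 z) with hFn
  have hexp : ∀ n : ℕ, -(m:ℝ)/2 < η + (n:ℝ) := fun n => by
    have : (0:ℝ) ≤ (n:ℝ) := Nat.cast_nonneg n
    linarith
  have hmom := fun n : ℕ => gauss_moment m hm (η + (n:ℝ)) (hexp n)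
  set M : ℕ → ℝ := fun n =>
    2 ^ (η + (n:ℝ)) * (Real.Gamma (η + (n:ℝ) + (m:ℝ)/2) / Real.Gamma ((m:ℝ)/2)) with hM
  have hMpos : ∀ n, 0 < M n := fun n => by
    rw [hM]
    have h1 : (0:ℝ) < 2 ^ (η + (n:ℝ)) := Real.rpow_pos_of_pos two_pos _
    have h2 := Real.Gamma_pos_of_pos (show 0 < η + (n:ℝ) + (m:ℝ)/2 by
      have : (0:ℝ) ≤ (n:ℝ) := Nat.cast_nonneg n
      linarith)
    have h3 := Real.Gamma_pos_of_pos hm2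
    positivity
  have hgauss_nonneg : ∀ z : Fin m → ℝ, 0 ≤ gaussDensityIso m 0 1 z := fun z => by
    rw [gaussDensityIso_eq]
    positivity
  -- a.e. pointwise series expansion
  have hz0 : ∀ᵐ z : Fin m → ℝ, z ≠ 0 := by
    refine ae_iff.mpr ?_
    have : {a : Fin m → ℝ | ¬ a ≠ 0} = {0} := by
      ext a; simp
    rw [this]
    exact measure_singleton _
  have hae : ∀ᵐ z : Fin m → ℝ,
      (∑ i, z i ^ 2) ^ η * oneF1 (-μ) ((m : ℝ) / 2) (-(γ * ∑ i, z i ^ 2) / 2) *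
        gaussDensityIso m 0 1 z = ∑' n, Fn n z := by
    filter_upwards [hz0] with z hz
    have hS : 0 < ∑ i, z i ^ 2 := by
      obtain ⟨i, hi⟩ := Function.ne_iff.mp hz
      refine Finset.sum_pos' (fun j _ => sq_nonneg _) ⟨i, Finset.mem_univ i, ?_⟩
      have : z i ≠ 0 := by simpa using hi
      positivity
    rw [oneF1]
    rw [← tsum_mul_left, ← tsum_mul_right]
    refine tsum_congr fun n => ?_
    have h1 : (-(γ * ∑ i, z i ^ 2) / 2) ^ n = (-γ/2) ^ n * (∑ i, z i ^ 2) ^ n := by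
      rw [show -(γ * ∑ i, z i ^ 2) / 2 = (-γ/2) * ∑ i, z i ^ 2 by ring, mul_pow]
    have h2 : (∑ i, z i ^ 2) ^ (η + (n:ℝ)) = (∑ i, z i ^ 2) ^ η * (∑ i, z i ^ 2) ^ (n:ℕ) := by
      rw [Real.rpow_add hS, Real.rpow_natCast]
    rw [hFn]
    simp only
    rw [h1, h2, hc]
    ring
  rw [integral_congr_ae hae]
  have hInt : ∀ n, Integrable (Fn n) := fun n => ((hmom n).1.const_mul _)
  have hNorm : ∀ n, (∫ z : Fin m → ℝ, ‖Fn n z‖) = |c n| * M n := fun n => by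
    have habs : ∀ z : Fin m → ℝ, ‖Fn n z‖
        = |c n| * ((∑ i, z i ^ 2) ^ (η + (n:ℝ)) * gaussDensityIso m 0 1 z) := fun z => by
      have h0 : 0 ≤ (∑ i, z i ^ 2) ^ (η + (n:ℝ)) * gaussDensityIso m 0 1 z :=
        mul_nonneg (Real.rpow_nonneg (Finset.sum_nonneg fun i _ => sq_nonneg _) _)
          (hgauss_nonneg z)
      rw [hFn]
      simp only
      rw [Real.norm_eq_abs, abs_mul, abs_of_nonneg h0]
    simp_rw [habs]
    rw [integral_const_mul, (hmom n).2, hM]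
  -- ratio test summability
  set A : ℕ → ℝ := fun n => |c n| * M n with hA
  have hA_nonneg : ∀ n, 0 ≤ A n := fun n => mul_nonneg (abs_nonneg _) (hMpos n).le
  have hc_rec : ∀ n : ℕ, c (n+1)
      = c n * (((-μ) + (n:ℝ)) * (-γ/2) / ((((m:ℝ)/2 + n)) * ((n:ℝ)+1))) := by
    intro n
    simp only [hc]
    rw [poch_succ, poch_succ, pow_succ, Nat.factorial_succ]
    have h1 : poch ((m:ℝ)/2) n ≠ 0 := (poch_pos hm2 n).ne'
    have h2 : ((m:ℝ)/2 + (n:ℝ)) ≠ 0 := by positivity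
    have h3 : ((n:ℝ)+1) ≠ 0 := by positivity
    have h4 : ((n.factorial : ℕ) : ℝ) ≠ 0 := Nat.cast_ne_zero.mpr n.factorial_ne_zero
    push_cast
    field_simp
  have hc_abs : ∀ n : ℕ, |c (n+1)|
      = |c n| * (|(-μ) + (n:ℝ)| * (γ/2) / ((((m:ℝ)/2 + n)) * ((n:ℝ)+1))) := by
    intro n
    rw [hc_rec n, abs_mul]
    congr 1
    have h2 : (0:ℝ) < (m:ℝ)/2 + (n:ℝ) := by positivity
    have h3 : (0:ℝ) < (n:ℝ)+1 := by positivity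
    rw [abs_div, abs_mul, abs_mul, abs_of_pos h2, abs_of_pos h3,
      show |(-γ/2 : ℝ)| = γ/2 by
        rw [abs_of_nonpos (by linarith : (-γ/2:ℝ) ≤ 0)]; ring]
  have hM_rec : ∀ n : ℕ, M (n+1) = M n * (2 * (η + (n:ℝ) + (m:ℝ)/2)) := by
    intro n
    simp only [hM]
    have hpos : 0 < η + (n:ℝ) + (m:ℝ)/2 := by
      have : (0:ℝ) ≤ (n:ℝ) := Nat.cast_nonneg n
      linarith
    push_cast
    rw [show η + ((n:ℝ)+1) = (η + (n:ℝ)) + 1 by ring, Real.rpow_add two_pos, Real.rpow_one,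
      show η + (n:ℝ) + 1 + (m:ℝ)/2 = (η + (n:ℝ) + (m:ℝ)/2) + 1 by ring,
      Real.Gamma_add_one hpos.ne']
    ring
  set q : ℕ → ℝ := fun n =>
    |(-μ) + (n:ℝ)| * (γ/2) / ((((m:ℝ)/2 + n)) * ((n:ℝ)+1)) * (2 * (η + (n:ℝ) + (m:ℝ)/2))
    with hq_def
  have hA_rec : ∀ n, A (n+1) = A n * q n := by
    intro n
    simp only [hA, hq_def]
    rw [hc_abs n, hM_rec n]
    ring
  have hq_tendsto : Filter.Tendsto q Filter.atTop (nhds γ) := by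
    have heq : ∀ᶠ n : ℕ in Filter.atTop, q n
        = γ * ((1 - (μ+1)/((n:ℝ)+1)) * (1 + η/((m:ℝ)/2 + n))) := by
      filter_upwards [Filter.eventually_ge_atTop (Nat.ceil (|μ|+1))] with n hn
      have hnμ : μ ≤ (n:ℝ) := by
        have h1 : ((Nat.ceil (|μ|+1) : ℕ) : ℝ) ≤ (n:ℝ) := by exact_mod_cast hn
        have h2 : |μ| + 1 ≤ ((Nat.ceil (|μ|+1) : ℕ) : ℝ) := Nat.le_ceil _
        have := le_abs_self μ
        linarith
      have habs : |(-μ) + (n:ℝ)| = (n:ℝ) - μ := by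
        rw [abs_of_nonneg (by linarith)]
        ring
      have h2 : ((m:ℝ)/2 + (n:ℝ)) ≠ 0 := by positivity
      have h3 : ((n:ℝ)+1) ≠ 0 := by positivity
      simp only [hq_def]
      rw [habs]
      field_simp
      ring
    rw [Filter.tendsto_congr' heq]
    have t1 : Filter.Tendsto (fun n : ℕ => 1 - (μ+1)/((n:ℝ)+1)) Filter.atTop (nhds 1) := by
      have h0 : Filter.Tendsto (fun n : ℕ => (μ+1)/((n:ℝ)+1)) Filter.atTop (nhds 0) := by
        have := (tendsto_const_div_atTop_nhds_zero_nat (μ+1)).comp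
          (Filter.tendsto_add_atTop_nat 1)
        refine this.congr fun n => ?_
        show (μ+1) / ((n+1 : ℕ) : ℝ) = (μ+1)/((n:ℝ)+1)
        push_cast
        ring_nf
      simpa using tendsto_const_nhds.sub h0
    have t2 : Filter.Tendsto (fun n : ℕ => 1 + η/((m:ℝ)/2 + n)) Filter.atTop (nhds 1) := by
      have hden : Filter.Tendsto (fun n : ℕ => (m:ℝ)/2 + n) Filter.atTop Filter.atTop :=
        Filter.tendsto_atTop_add_const_left _ _ tendsto_natCast_atTop_atTop
      have h0 : Filter.Tendsto (fun n : ℕ => η/((m:ℝ)/2 + n)) Filter.atTop (nhds 0) := by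
        have := (tendsto_inv_atTop_zero.comp hden).const_mul η
        simpa [div_eq_mul_inv] using this
      simpa using tendsto_const_nhds.add h0
    have := (t1.mul t2).const_mul γ
    simpa using this
  set r : ℝ := (1 + γ)/2 with hr_def
  have hγr : γ < r := by rw [hr_def]; linarith
  have hr1 : r < 1 := by rw [hr_def]; linarith
  have hsumA : Summable A := by
    refine summable_of_ratio_norm_eventually_le hr1 ?_
    filter_upwards [hq_tendsto.eventually_lt_const hγr] with n hn
    rw [Real.norm_eq_abs, Real.norm_eq_abs, abs_of_nonneg (hA_nonneg (n+1)),
      abs_of_nonneg (hA_nonneg n), hA_rec n, mul_comm r (A n)]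
    exact mul_le_mul_of_nonneg_left hn.le (hA_nonneg n)
  -- interchange sum and integral
  have hne : (∑' n, ∫⁻ z : Fin m → ℝ, ‖Fn n z‖₊) ≠ ⊤ := by
    have hl : ∀ n, (∫⁻ z : Fin m → ℝ, ‖Fn n z‖₊) = ENNReal.ofReal (A n) := fun n => by
      show ∫⁻ z, ‖Fn n z‖ₑ = _
      rw [← ofReal_integral_norm_eq_lintegral_enorm (hInt n), hNorm n]
    rw [tsum_congr hl, ← ENNReal.ofReal_tsum_of_nonneg hA_nonneg hsumA]
    exact ENNReal.ofReal_ne_top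
  rw [integral_tsum (fun n => (hInt n).aestronglyMeasurable) hne]
  have hval : ∀ n, (∫ z : Fin m → ℝ, Fn n z) = c n * M n := fun n => by
    simp only [hFn]
    rw [integral_const_mul, (hmom n).2, hM]
  have hterm : ∀ n, c n * M n
      = (2:ℝ)^η * (Real.Gamma (η + (m:ℝ)/2) / Real.Gamma ((m:ℝ)/2)) *
        (poch (η + (m:ℝ)/2) n * poch (-μ) n / poch ((m:ℝ)/2) n * (-γ)^n / (n.factorial : ℝ)) := by
    intro n
    have hG : Real.Gamma (η + (n:ℝ) + (m:ℝ)/2)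
        = Real.Gamma (η + (m:ℝ)/2) * poch (η + (m:ℝ)/2) n := by
      rw [show η + (n:ℝ) + (m:ℝ)/2 = (η + (m:ℝ)/2) + n by ring]
      exact Gamma_add_nat hsm n
    have h2 : (2:ℝ) ^ (η + (n:ℝ)) = 2 ^ η * 2 ^ (n:ℕ) := by
      rw [Real.rpow_add two_pos, Real.rpow_natCast]
    have h3 : (-γ/2 : ℝ)^n = (-γ)^n / 2^n := by
      rw [show (-γ/2 : ℝ) = (-γ)/2 by ring, div_pow]
    simp only [hc, hM]
    rw [hG, h2, h3]
    have hp1 : poch ((m:ℝ)/2) n ≠ 0 := (poch_pos hm2 n).ne'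
    have hp2 : ((n.factorial : ℕ) : ℝ) ≠ 0 := Nat.cast_ne_zero.mpr n.factorial_ne_zero
    have hp3 : ((2:ℝ)^n) ≠ 0 := by positivity
    have hp4 : Real.Gamma ((m:ℝ)/2) ≠ 0 := (Real.Gamma_pos_of_pos hm2).ne'
    field_simp
  calc (∑' n, ∫ z : Fin m → ℝ, Fn n z)
      = ∑' n, (2:ℝ)^η * (Real.Gamma (η + (m:ℝ)/2) / Real.Gamma ((m:ℝ)/2)) *
          (poch (η + (m:ℝ)/2) n * poch (-μ) n / poch ((m:ℝ)/2) n * (-γ)^n / (n.factorial : ℝ)) :=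
        tsum_congr fun n => (hval n).trans (hterm n)
    _ = (2:ℝ)^η * (Real.Gamma (η + (m:ℝ)/2) / Real.Gamma ((m:ℝ)/2)) *
        twoF1 (η + (m:ℝ)/2) (-μ) ((m:ℝ)/2) (-γ) := by
        rw [twoF1, tsum_mul_left]
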